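/- For each natural number k ≥ 3, let m_k denote the unique positive integer satisfying m_k! < k ≤ (m_k + 1)!. Then for every natural number n ≥ 7 (so that m_n ≥ 3), one has Σ_{k=3}^{n} m_k = n·m_n − m_n! − 4 − Σ_{k=3}^{m_n − 1} k!. -/

import Mathlib

lemma m_uniq (m m' k : ℕ) (h1 : Nat.factorial m < k) (h2 : k ≤ Nat.factorial (m + 1))
    (h3 : Nat.factorial m' < k) (h4 : k ≤ Nat.factorial (m' + 1)) : m = m' := by
  by_contra h
  rcases Nat.lt_or_ge m m' with hlt | hge
  · have : Nat.factorial (m + 1) ≤ Nat.factorial m' := Nat.factorial_le hlt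
    omega
  · have hlt : m' < m := lt_of_le_of_ne hge (Ne.symm h)
    have : Nat.factorial (m' + 1) ≤ Nat.factorial m := Nat.factorial_le hlt
    omega

/-- For `k ≥ 3` let `M k` be the unique positive integer with
`(M k)! < k ≤ (M k + 1)!`. Then for every `n ≥ 7` (so that `M n ≥ 3`),
`Σ_{k=3}^{n} M k = n·(M n) − (M n)! − 4 − Σ_{k=3}^{M n − 1} k!`. -/
theorem sum_m_k_eq (M : ℕ → ℕ)
    (hM : ∀ k : ℕ, 3 ≤ k → 0 < M k ∧ Nat.factorial (M k) < k ∧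
      k ≤ Nat.factorial (M k + 1)) :
    ∀ n : ℕ, 7 ≤ n →
      (∑ k ∈ Finset.Icc 3 n, (M k : ℤ)) =
        (n : ℤ) * (M n : ℤ) - (Nat.factorial (M n) : ℤ) - 4 -
          ∑ k ∈ Finset.Icc 3 (M n - 1), (Nat.factorial k : ℤ) := by
  intro n hn
  induction n, hn using Nat.le_induction with
  | base =>
    have h3 := hM 3 (by norm_num)
    have h4 := hM 4 (by norm_num)
    have h5 := hM 5 (by norm_num)
    have h6 := hM 6 (by norm_num)
    have h7 := hM 7 (by norm_num)
    have e3 : M 3 = 2 := m_uniq _ _ 3 h3.2.1 h3.2.2 (by decide) (by decide)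
    have e4 : M 4 = 2 := m_uniq _ _ 4 h4.2.1 h4.2.2 (by decide) (by decide)
    have e5 : M 5 = 2 := m_uniq _ _ 5 h5.2.1 h5.2.2 (by decide) (by decide)
    have e6 : M 6 = 2 := m_uniq _ _ 6 h6.2.1 h6.2.2 (by decide) (by decide)
    have e7 : M 7 = 3 := m_uniq _ _ 7 h7.2.1 h7.2.2 (by decide) (by decide)
    rw [show Finset.Icc 3 7 = {3, 4, 5, 6, 7} from rfl]
    rw [e7]
    rw [show Finset.Icc 3 (3 - 1) = ∅ from rfl]
    simp [e3, e4, e5, e6, e7]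
    norm_num [Nat.factorial]
  | succ n hn ih =>
    have hMn := hM n (by omega)
    have hMn1 := hM (n + 1) (by omega)
    set m := M n with hm
    set m' := M (n + 1) with hm'
    -- m ≥ 3
    have hm3 : 3 ≤ m := by
      by_contra h
      have : Nat.factorial (m + 1) ≤ Nat.factorial 3 := Nat.factorial_le (by omega)
      have : Nat.factorial 3 = 6 := by decide
      omega
    have hsum : (∑ k ∈ Finset.Icc 3 (n + 1), (M k : ℤ)) =
        (∑ k ∈ Finset.Icc 3 n, (M k : ℤ)) + (m' : ℤ) := by
      rw [Finset.sum_Icc_succ_top (by omega)]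
    by_cases hc : n + 1 ≤ Nat.factorial (m + 1)
    · -- M (n+1) = m
      have hmm : m' = m := m_uniq _ _ (n + 1) hMn1.2.1 hMn1.2.2 (by omega) hc
      rw [hsum, ih, hmm]
      push_cast
      ring
    · -- n = (m+1)!, M(n+1) = m + 1
      have hne : n = Nat.factorial (m + 1) := by omega
      have hmm : m' = m + 1 := by
        have hle : Nat.factorial m' ≤ Nat.factorial (m + 1) := by omega
        have h1 : m' ≤ m + 1 := by
          by_contra h
          have := Nat.factorial_lt (n := m + 1) (m := m') (by omega) |>.mpr (by omega)
          omega
        have h2 : Nat.factorial (m + 1) < Nat.factorial (m' + 1) := by omega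
        have h3 : m + 1 < m' + 1 := by
          by_contra h
          have := Nat.factorial_le (show m' + 1 ≤ m + 1 by omega)
          omega
        omega
      rw [hsum, ih, hmm]
      have hsub1 : m + 1 - 1 = m := by omega
      have hsub2 : m = (m - 1) + 1 := by omega
      rw [hsub1, hsub2, Finset.sum_Icc_succ_top (by omega), ← hsub2]
      have hfac : Nat.factorial (m + 1) = (m + 1) * Nat.factorial m := rfl
      have hne' : (n : ℤ) = ((m : ℤ) + 1) * (Nat.factorial m : ℤ) := by
        rw [hne]; push_cast [hfac]; ring
      push_cast [hfac]
      rw [hne']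
      ring
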